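/- (Vanishing first moment of Au.) Let A be a self-adjoint operator of the form Au = J*u − u with J as in the previous statement (or the Laplacian or fractional Laplacian). If u ∈ L¹(ℝᴺ) satisfies ∫ |x_N u(x)| dx < ∞ and ∫ |x_N (Au)(x)| dx < ∞, then ∫_{ℝᴺ} x_N (Au)(x) dx = 0. -/

import Mathlib

open MeasureTheory Real Set Filter Asymptotics
open scoped RealInnerProductSpace


private lemma aux_deriv {α : Type*} [MeasurableSpace α] {μ : MeasureTheory.Measure α}
    {c f : α → ℝ} (hc : Measurable c) (hf : Integrable f μ)
    (hcf : Integrable (fun x => c x * f x) μ) :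
    HasDerivAt (fun t : ℝ => ∫ x, Complex.exp (-(Complex.I * ((t * c x : ℝ) : ℂ))) * (f x : ℂ) ∂μ)
      (-(Complex.I * ((∫ x, c x * f x ∂μ : ℝ) : ℂ))) 0 := by
  have key : ∀ (x : α) (t : ℝ),
      HasDerivAt (fun s : ℝ => Complex.exp (-(Complex.I * ((s * c x : ℝ) : ℂ))) * (f x : ℂ))
        ((-(Complex.I * (c x : ℂ))) * (Complex.exp (-(Complex.I * ((t * c x : ℝ) : ℂ))) * (f x : ℂ))) t := by
    intro x t
    set k : ℂ := -(Complex.I * (c x : ℂ)) with hk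
    have h1 : HasDerivAt (fun z : ℂ => Complex.exp (k * z)) (Complex.exp (k * t) * k) (t : ℂ) := by
      simpa [Function.comp_def] using (Complex.hasDerivAt_exp (k * t)).comp (t : ℂ) ((hasDerivAt_id (t : ℂ)).const_mul k)
    have h2 : HasDerivAt (fun s : ℝ => Complex.exp (k * s)) (Complex.exp (k * t) * k) t :=
      h1.comp_ofReal
    have h3 : ∀ s : ℝ, k * s = -(Complex.I * ((s * c x : ℝ) : ℂ)) := by
      intro s; rw [hk]; push_cast; ring
    have h4 : HasDerivAt (fun s : ℝ => Complex.exp (-(Complex.I * ((s * c x : ℝ) : ℂ))))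
        (Complex.exp (k * t) * k) t := by
      simpa only [h3] using h2
    have h5 := h4.mul_const ((f x : ℂ))
    refine h5.congr_deriv ?_
    rw [h3]; ring
  have measK : ∀ t : ℝ, Measurable fun x => Complex.exp (-(Complex.I * ((t * c x : ℝ) : ℂ))) := by
    intro t
    exact Complex.measurable_exp.comp
      (((Complex.measurable_ofReal.comp (hc.const_mul t)).const_mul Complex.I).neg)
  have meas : ∀ t : ℝ, AEStronglyMeasurable
      (fun x => Complex.exp (-(Complex.I * ((t * c x : ℝ) : ℂ))) * (f x : ℂ)) μ := fun t =>
    (measK t).aestronglyMeasurable.mul (Complex.continuous_ofReal.comp_aestronglyMeasurable hf.1)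
  have norm1 : ∀ (t : ℝ) (x : α), ‖Complex.exp (-(Complex.I * ((t * c x : ℝ) : ℂ)))‖ = 1 := by
    intro t x
    rw [Complex.norm_exp]
    simp
  have res := hasDerivAt_integral_of_dominated_loc_of_deriv_le (μ := μ)
    (F := fun (t : ℝ) x => Complex.exp (-(Complex.I * ((t * c x : ℝ) : ℂ))) * (f x : ℂ))
    (F' := fun (t : ℝ) x =>
      (-(Complex.I * (c x : ℂ))) * (Complex.exp (-(Complex.I * ((t * c x : ℝ) : ℂ))) * (f x : ℂ)))
    (x₀ := 0) (s := Metric.ball 0 1) (bound := fun x => ‖c x * f x‖) (Metric.ball_mem_nhds 0 one_pos)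
    (Eventually.of_forall meas)
    (by simpa using (hf.ofReal (𝕜 := ℂ) : Integrable (fun x => (f x : ℂ)) μ))
    ((((Complex.measurable_ofReal.comp hc).const_mul Complex.I).neg).aestronglyMeasurable.mul (meas 0))
    (Eventually.of_forall fun x => by
      intro t _
      simp [norm_mul, Real.norm_eq_abs, abs_mul, Complex.norm_exp])
    hcf.norm
    (Eventually.of_forall fun x t _ => key x t)
  have h6 : (∫ x, (-(Complex.I * (c x : ℂ))) *
      (Complex.exp (-(Complex.I * (((0:ℝ) * c x : ℝ) : ℂ))) * (f x : ℂ)) ∂μ)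
      = -(Complex.I * ((∫ x, c x * f x ∂μ : ℝ) : ℂ)) := by
    have : ∀ x : α, (-(Complex.I * (c x : ℂ))) *
        (Complex.exp (-(Complex.I * (((0:ℝ) * c x : ℝ) : ℂ))) * (f x : ℂ))
        = (-Complex.I) * (((c x * f x : ℝ) : ℂ)) := by
      intro x; push_cast; simp; ring
    simp_rw [this]
    have hio : ∫ a, ((c a * f a : ℝ) : ℂ) ∂μ = ((∫ a, (c a * f a) ∂μ : ℝ) : ℂ) :=
      integral_ofReal
    rw [integral_const_mul, hio]
    ring
  exact h6 ▸ res.2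

private lemma aux_fubini {N : ℕ} (J u : EuclideanSpace ℝ (Fin (N + 1)) → ℝ)
    (hJ : Integrable J) (hu : Integrable u) (t : ℝ) :
    (∫ x : EuclideanSpace ℝ (Fin (N + 1)),
        Complex.exp (-(Complex.I * ((t * x (Fin.last N) : ℝ) : ℂ))) * ((∫ y, J (x - y) * u y : ℝ) : ℂ))
      = (∫ x : EuclideanSpace ℝ (Fin (N + 1)),
          Complex.exp (-(Complex.I * ((t * x (Fin.last N) : ℝ) : ℂ))) * (J x : ℂ))
        * ∫ x : EuclideanSpace ℝ (Fin (N + 1)),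
            Complex.exp (-(Complex.I * ((t * x (Fin.last N) : ℝ) : ℂ))) * (u x : ℂ) := by
  let E := EuclideanSpace ℝ (Fin (N + 1))
  set K : EuclideanSpace ℝ (Fin (N + 1)) → ℂ := fun x => Complex.exp (-(Complex.I * ((t * x (Fin.last N) : ℝ) : ℂ))) with hK
  have hcont : Continuous fun x : EuclideanSpace ℝ (Fin (N + 1)) => x (Fin.last N) := (EuclideanSpace.proj (Fin.last N)).continuous
  have hKcont : Continuous K :=
    Complex.continuous_exp.comp
      ((continuous_const.mul (Complex.continuous_ofReal.comp (continuous_const.mul hcont))).neg)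
  have hK1 : ∀ x : E, ‖K x‖ = 1 := by
    intro x; rw [hK]; simp only []
    rw [Complex.norm_exp]; simp
  have hKadd : ∀ x y : E, K (x + y) = K x * K y := by
    intro x y
    rw [hK]; simp only []
    rw [← Complex.exp_add]
    congr 1
    have : (x + y) (Fin.last N) = x (Fin.last N) + y (Fin.last N) := rfl
    rw [this]; push_cast; ring
  -- base integrability on the product space
  have h_base : Integrable (fun p : E × E => u p.2 * J (p.1 - p.2)) (volume.prod volume) := by
    simpa using hu.convolution_integrand (ContinuousLinearMap.mul ℝ ℝ) hJ
  have h_base' : Integrable (fun p : E × E => ((J (p.1 - p.2) * u p.2 : ℝ) : ℂ)) (volume.prod volume) := by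
    have : Integrable (fun p : E × E => J (p.1 - p.2) * u p.2) (volume.prod volume) := by
      simpa [mul_comm] using h_base
    exact this.ofReal
  have h_prod : Integrable (fun p : E × E => K p.1 * ((J (p.1 - p.2) * u p.2 : ℝ) : ℂ))
      (volume.prod volume) :=
    h_base'.bdd_mul (hKcont.comp continuous_fst).aestronglyMeasurable (MeasureTheory.ae_of_all _ fun p => le_of_eq (hK1 p.1))
  -- step A : pull the constant inside
  have stepA : ∀ x : E, K x * ((∫ y, J (x - y) * u y : ℝ) : ℂ)
      = ∫ y, K x * ((J (x - y) * u y : ℝ) : ℂ) := by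
    intro x
    rw [integral_const_mul]
    congr 1
    exact (integral_ofReal (𝕜 := ℂ)).symm
  -- step C : inner integral computation
  have stepC : ∀ y : E, (∫ x, K x * ((J (x - y) * u y : ℝ) : ℂ))
      = (K y * ∫ x, K x * (J x : ℂ)) * (u y : ℂ) := by
    intro y
    have e1 : ∀ x : E, K x * ((J (x - y) * u y : ℝ) : ℂ) = (K x * ((J (x - y) : ℝ) : ℂ)) * (u y : ℂ) := by
      intro x; push_cast; ring
    simp_rw [e1]
    rw [integral_mul_const]
    congr 1
    have e2 : (∫ x : E, K (x + y) * ((J x : ℝ) : ℂ)) = ∫ x : E, K x * ((J (x - y) : ℝ) : ℂ) := by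
      have := MeasureTheory.integral_add_right_eq_self (μ := (volume : Measure E))
        (fun x : E => K x * ((J (x - y) : ℝ) : ℂ)) y
      simpa using this
    rw [← e2]
    have e3 : ∀ x : E, K (x + y) * ((J x : ℝ) : ℂ) = K y * (K x * (J x : ℂ)) := by
      intro x; rw [hKadd]; ring
    simp_rw [e3]
    rw [integral_const_mul]
  calc (∫ x : E, K x * ((∫ y, J (x - y) * u y : ℝ) : ℂ))
      = ∫ x : E, ∫ y : E, K x * ((J (x - y) * u y : ℝ) : ℂ) := by simp_rw [stepA]; rfl
    _ = ∫ y : E, ∫ x : E, K x * ((J (x - y) * u y : ℝ) : ℂ) :=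
        MeasureTheory.integral_integral_swap h_prod
    _ = ∫ y : E, (K y * ∫ x, K x * (J x : ℂ)) * (u y : ℂ) := by exact integral_congr_ae (MeasureTheory.ae_of_all _ stepC)
    _ = (∫ x : E, K x * (J x : ℂ)) * ∫ y : E, K y * (u y : ℂ) := by
        have e4 : ∀ y : E, (K y * ∫ x, K x * (J x : ℂ)) * (u y : ℂ)
            = (∫ x, K x * (J x : ℂ)) * (K y * (u y : ℂ)) := fun y => by ring
        simp_rw [e4]
        rw [integral_const_mul]

private lemma aux_limit {JT UT AT : ℝ → ℂ} {D : ℂ} {β : ℝ} (hβ0 : 0 < β)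
    (hATeq : ∀ t, AT t = (JT t - 1) * UT t)
    (hJTeven : ∀ t, JT (-t) = JT t)
    (hDA : HasDerivAt AT D 0)
    (hAT0 : AT 0 = 0)
    (hUd : ∃ dU, HasDerivAt UT dU 0)
    (hO1 : ∃ C, ∀ᶠ t : ℝ in nhds 0, ‖JT t - 1‖ ≤ C * |t| ^ β) :
    D = 0 := by
  obtain ⟨dU, hUd⟩ := hUd
  obtain ⟨C, hC⟩ := hO1
  have hs1 : Tendsto (fun t : ℝ => t⁻¹ • AT t) (nhdsWithin 0 {(0:ℝ)}ᶜ) (nhds D) := by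
    have h := hasDerivAt_iff_tendsto_slope.mp hDA
    have e : slope AT 0 = fun t => t⁻¹ • AT t := by
      funext t; simp [slope, hAT0]
    rwa [e] at h
  have hneg : Tendsto (fun t : ℝ => -t) (nhdsWithin 0 {(0:ℝ)}ᶜ) (nhdsWithin 0 {(0:ℝ)}ᶜ) := by
    rw [tendsto_nhdsWithin_iff]
    constructor
    · simpa using (continuous_neg.tendsto (0:ℝ)).mono_left nhdsWithin_le_nhds
    · filter_upwards [self_mem_nhdsWithin] with t ht
      simpa using ht
  have hs2 : Tendsto (fun t : ℝ => (-t)⁻¹ • AT (-t)) (nhdsWithin 0 {(0:ℝ)}ᶜ) (nhds D) :=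
    hs1.comp hneg
  have hsum := hs1.add hs2
  -- O(t) bound on UT differences
  obtain ⟨C₂, hC₂⟩ := Asymptotics.isBigO_iff.mp hUd.hasFDerivAt.isBigO_sub
  have hC₂' : ∀ᶠ t : ℝ in nhds 0, ‖UT (-t) - UT 0‖ ≤ C₂ * ‖(-t) - 0‖ := by
    have hnt : Tendsto (fun t : ℝ => -t) (nhds (0:ℝ)) (nhds (0:ℝ)) := by
      simpa using (continuous_neg.tendsto (0:ℝ))
    exact hnt.eventually hC₂
  have hbound : ∀ᶠ t in nhdsWithin 0 {(0:ℝ)}ᶜ,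
      ‖t⁻¹ • AT t + (-t)⁻¹ • AT (-t)‖ ≤ (|C| * (2 * |C₂|)) * |t| ^ β := by
    filter_upwards [nhdsWithin_le_nhds hC, nhdsWithin_le_nhds hC₂,
      nhdsWithin_le_nhds hC₂', self_mem_nhdsWithin] with t h1 h2 h3 ht
    have hne : t ≠ 0 := by simpa using ht
    have h4 : ‖UT t - UT (-t)‖ ≤ 2 * |C₂| * |t| := by
      have e : UT t - UT (-t) = (UT t - UT 0) - (UT (-t) - UT 0) := by ring
      rw [e]
      refine (norm_sub_le _ _).trans ?_
      have b1 : ‖UT t - UT 0‖ ≤ |C₂| * |t| := by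
        refine h2.trans ?_
        simp only [sub_zero, Real.norm_eq_abs]
        exact mul_le_mul_of_nonneg_right (le_abs_self C₂) (abs_nonneg t)
      have b2 : ‖UT (-t) - UT 0‖ ≤ |C₂| * |t| := by
        refine h3.trans ?_
        simp only [sub_zero, Real.norm_eq_abs, abs_neg]
        exact mul_le_mul_of_nonneg_right (le_abs_self C₂) (abs_nonneg t)
      linarith
    have h5 : ‖JT t - 1‖ ≤ |C| * |t| ^ β :=
      h1.trans (mul_le_mul_of_nonneg_right (le_abs_self C) (Real.rpow_nonneg (abs_nonneg t) β))
    have hrw : t⁻¹ • AT t + (-t)⁻¹ • AT (-t) = t⁻¹ • ((JT t - 1) * (UT t - UT (-t))) := by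
      rw [hATeq t, hATeq (-t), hJTeven t]
      simp only [Complex.real_smul]
      push_cast
      rw [inv_neg]
      ring
    rw [hrw, norm_smul, Real.norm_eq_abs, abs_inv, norm_mul]
    calc |t|⁻¹ * (‖JT t - 1‖ * ‖UT t - UT (-t)‖)
        ≤ |t|⁻¹ * ((|C| * |t| ^ β) * (2 * |C₂| * |t|)) := by
          refine mul_le_mul_of_nonneg_left ?_ (inv_nonneg.2 (abs_nonneg t))
          exact mul_le_mul h5 h4 (norm_nonneg _) (by positivity)
      _ = (|C| * (2 * |C₂|)) * |t| ^ β * (|t|⁻¹ * |t|) := by ring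
      _ = (|C| * (2 * |C₂|)) * |t| ^ β := by
          rw [inv_mul_cancel₀ (abs_ne_zero.2 hne), mul_one]
  have hzero : Tendsto (fun t : ℝ => t⁻¹ • AT t + (-t)⁻¹ • AT (-t))
      (nhdsWithin 0 {(0:ℝ)}ᶜ) (nhds 0) := by
    refine squeeze_zero_norm' hbound ?_
    have h7 : Tendsto (fun t : ℝ => |t| ^ β) (nhds (0:ℝ)) (nhds 0) := by
      have h8 : ContinuousAt (fun r : ℝ => r ^ β) 0 :=
        Real.continuousAt_rpow_const 0 β (Or.inr hβ0.le)
      have := h8.tendsto.comp (continuous_abs.tendsto' (0:ℝ) 0 abs_zero)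
      simpa [Function.comp_def, Real.zero_rpow hβ0.ne'] using this
    have := (h7.const_mul (|C| * (2 * |C₂|))).mono_left
      (nhdsWithin_le_nhds (s := {(0:ℝ)}ᶜ))
    simpa using this
  have hDD : D + D = 0 := tendsto_nhds_unique hsum hzero
  have := add_self_eq_zero.mp hDD
  exact this

/-- vanishing first moment of `Au`. For the self-adjoint convolution
operator `Au = J*u − u` (with `J ∈ L¹ ∩ L∞` nonnegative, even, and with
`Ĵ(ξ) = 1 − a|ξ|^β + o(|ξ|^β)` as `ξ → 0`), if `u ∈ L¹` with `∫|x_N u| < ∞` and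
`∫|x_N (Au)| < ∞`, then `∫ x_N (Au)(x) dx = 0`.  Ambient space `ℝ^(N+1)`. -/
theorem stmt14 {N : ℕ} (J : EuclideanSpace ℝ (Fin (N + 1)) → ℝ)
    (hJint : Integrable J) (hJbdd : ∃ M : ℝ, ∀ x, |J x| ≤ M) (hJpos : ∀ x, 0 ≤ J x)
    (hJeven : ∀ x, J (-x) = J x)
    (a β : ℝ) (ha : 0 < a) (hβ0 : 0 < β) (hβ2 : β ≤ 2)
    (hasymp : (fun ξ : EuclideanSpace ℝ (Fin (N + 1)) =>
        (∫ x, Complex.exp (-(Complex.I * ((⟪x, ξ⟫ : ℝ) : ℂ))) * (J x : ℂ))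
          - (((1 - a * ‖ξ‖ ^ β : ℝ)) : ℂ))
      =o[nhds 0] (fun ξ => ‖ξ‖ ^ β))
    (u Au : EuclideanSpace ℝ (Fin (N + 1)) → ℝ)
    (hu : Integrable u)
    (hAu : ∀ x, Au x = (∫ y, J (x - y) * u y) - u x)
    (hmom : Integrable (fun x : EuclideanSpace ℝ (Fin (N + 1)) => x (Fin.last N) * u x))
    (hmomA : Integrable (fun x : EuclideanSpace ℝ (Fin (N + 1)) => x (Fin.last N) * Au x)) :
    (∫ x : EuclideanSpace ℝ (Fin (N + 1)), x (Fin.last N) * Au x) = 0 := by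
  classical
  -- basic objects
  have hc : Continuous (fun x : EuclideanSpace ℝ (Fin (N + 1)) => x (Fin.last N)) :=
    (EuclideanSpace.proj (Fin.last N)).continuous
  have hm : Measurable (fun x : EuclideanSpace ℝ (Fin (N + 1)) => x (Fin.last N)) := hc.measurable
  -- the three "line Fourier transforms"
  set JT : ℝ → ℂ := fun t => ∫ x : EuclideanSpace ℝ (Fin (N + 1)),
    Complex.exp (-(Complex.I * ((t * x (Fin.last N) : ℝ) : ℂ))) * (J x : ℂ) with hJTdef
  set UT : ℝ → ℂ := fun t => ∫ x : EuclideanSpace ℝ (Fin (N + 1)),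
    Complex.exp (-(Complex.I * ((t * x (Fin.last N) : ℝ) : ℂ))) * (u x : ℂ) with hUTdef
  set AT : ℝ → ℂ := fun t => ∫ x : EuclideanSpace ℝ (Fin (N + 1)),
    Complex.exp (-(Complex.I * ((t * x (Fin.last N) : ℝ) : ℂ))) * (Au x : ℂ) with hATdef
  set Fx : EuclideanSpace ℝ (Fin (N + 1)) → ℂ := fun ξ =>
    ∫ x, Complex.exp (-(Complex.I * ((⟪x, ξ⟫ : ℝ) : ℂ))) * (J x : ℂ) with hFxdef
  set eN : EuclideanSpace ℝ (Fin (N + 1)) := EuclideanSpace.single (Fin.last N) (1:ℝ) with heN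
  -- kernel facts
  have norm1 : ∀ (t : ℝ) (x : EuclideanSpace ℝ (Fin (N + 1))),
      ‖Complex.exp (-(Complex.I * ((t * x (Fin.last N) : ℝ) : ℂ)))‖ = 1 := by
    intro t x
    rw [Complex.norm_exp]
    simp
  have measK : ∀ t : ℝ, Measurable fun x : EuclideanSpace ℝ (Fin (N + 1)) =>
      Complex.exp (-(Complex.I * ((t * x (Fin.last N) : ℝ) : ℂ))) := by
    intro t
    exact Complex.measurable_exp.comp
      (((Complex.measurable_ofReal.comp (hm.const_mul t)).const_mul Complex.I).neg)
  -- integrability of Au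
  have h_base : Integrable (fun p : (EuclideanSpace ℝ (Fin (N + 1))) × (EuclideanSpace ℝ (Fin (N + 1))) =>
      u p.2 * J (p.1 - p.2)) (volume.prod volume) := by
    simpa using hu.convolution_integrand (ContinuousLinearMap.mul ℝ ℝ) hJint
  have hconv : Integrable (fun x : EuclideanSpace ℝ (Fin (N + 1)) => ∫ y, u y * J (x - y)) :=
    h_base.integral_prod_left
  have hconv' : Integrable (fun x : EuclideanSpace ℝ (Fin (N + 1)) => ∫ y, J (x - y) * u y) := by
    simpa [mul_comm] using hconv
  have hAuInt : Integrable Au :=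
    (hconv'.sub hu).congr (MeasureTheory.ae_of_all _ fun x => (hAu x).symm)
  -- derivative facts
  have hDA : HasDerivAt AT
      (-(Complex.I * ((∫ x : EuclideanSpace ℝ (Fin (N + 1)), x (Fin.last N) * Au x : ℝ) : ℂ))) 0 :=
    aux_deriv hm hAuInt hmomA
  have hUd : ∃ dU, HasDerivAt UT dU 0 := ⟨_, aux_deriv hm hu hmom⟩
  -- the key identity AT = (JT - 1) * UT
  have hATeq : ∀ t : ℝ, AT t = (JT t - 1) * UT t := by
    intro t
    have hint1 : Integrable (fun x : EuclideanSpace ℝ (Fin (N + 1)) =>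
        Complex.exp (-(Complex.I * ((t * x (Fin.last N) : ℝ) : ℂ))) * ((∫ y, J (x - y) * u y : ℝ) : ℂ)) :=
      hconv'.ofReal.bdd_mul (measK t).aestronglyMeasurable (MeasureTheory.ae_of_all _ fun x => le_of_eq (norm1 t x))
    have hint2 : Integrable (fun x : EuclideanSpace ℝ (Fin (N + 1)) =>
        Complex.exp (-(Complex.I * ((t * x (Fin.last N) : ℝ) : ℂ))) * ((u x : ℝ) : ℂ)) :=
      hu.ofReal.bdd_mul (measK t).aestronglyMeasurable (MeasureTheory.ae_of_all _ fun x => le_of_eq (norm1 t x))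
    have h1 : ∀ x : EuclideanSpace ℝ (Fin (N + 1)),
        Complex.exp (-(Complex.I * ((t * x (Fin.last N) : ℝ) : ℂ))) * (Au x : ℂ)
        = Complex.exp (-(Complex.I * ((t * x (Fin.last N) : ℝ) : ℂ))) * ((∫ y, J (x - y) * u y : ℝ) : ℂ)
          - Complex.exp (-(Complex.I * ((t * x (Fin.last N) : ℝ) : ℂ))) * ((u x : ℝ) : ℂ) := by
      intro x; rw [hAu x]; push_cast; ring
    calc AT t = ∫ x : EuclideanSpace ℝ (Fin (N + 1)),
          (Complex.exp (-(Complex.I * ((t * x (Fin.last N) : ℝ) : ℂ))) * ((∫ y, J (x - y) * u y : ℝ) : ℂ)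
          - Complex.exp (-(Complex.I * ((t * x (Fin.last N) : ℝ) : ℂ))) * ((u x : ℝ) : ℂ)) :=
        integral_congr_ae (MeasureTheory.ae_of_all _ h1)
      _ = (∫ x : EuclideanSpace ℝ (Fin (N + 1)),
            Complex.exp (-(Complex.I * ((t * x (Fin.last N) : ℝ) : ℂ))) * ((∫ y, J (x - y) * u y : ℝ) : ℂ))
          - ∫ x : EuclideanSpace ℝ (Fin (N + 1)),
            Complex.exp (-(Complex.I * ((t * x (Fin.last N) : ℝ) : ℂ))) * ((u x : ℝ) : ℂ) :=
        integral_sub hint1 hint2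
      _ = JT t * UT t - UT t := by rw [aux_fubini J u hJint hu t]
      _ = (JT t - 1) * UT t := by ring
  -- evenness of JT
  have hJTeven : ∀ t : ℝ, JT (-t) = JT t := by
    intro t
    have h1 : ∀ x : EuclideanSpace ℝ (Fin (N + 1)),
        Complex.exp (-(Complex.I * ((-t * x (Fin.last N) : ℝ) : ℂ))) * (J x : ℂ)
        = (fun y : EuclideanSpace ℝ (Fin (N + 1)) =>
            Complex.exp (-(Complex.I * ((t * y (Fin.last N) : ℝ) : ℂ))) * (J y : ℂ)) (-x) := by
      intro x
      simp only []
      rw [hJeven]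
      congr 2
      have e : (-x) (Fin.last N) = -(x (Fin.last N)) := rfl
      rw [e]; push_cast; ring
    calc JT (-t) = ∫ x : EuclideanSpace ℝ (Fin (N + 1)),
          (fun y : EuclideanSpace ℝ (Fin (N + 1)) =>
            Complex.exp (-(Complex.I * ((t * y (Fin.last N) : ℝ) : ℂ))) * (J y : ℂ)) (-x) :=
        integral_congr_ae (MeasureTheory.ae_of_all _ h1)
      _ = JT t :=
        MeasureTheory.integral_neg_eq_self
          (fun y : EuclideanSpace ℝ (Fin (N + 1)) =>
            Complex.exp (-(Complex.I * ((t * y (Fin.last N) : ℝ) : ℂ))) * (J y : ℂ)) volume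
  -- inner product along the eN line
  have hip : ∀ (t : ℝ) (x : EuclideanSpace ℝ (Fin (N + 1))),
      (⟪x, t • eN⟫ : ℝ) = t * x (Fin.last N) := by
    intro t x
    rw [real_inner_smul_right, heN, EuclideanSpace.inner_single_right]
    simp
  have heq : ∀ t : ℝ, Fx (t • eN) = JT t := by
    intro t
    refine integral_congr_ae (MeasureTheory.ae_of_all _ fun x => ?_)
    show Complex.exp (-(Complex.I * ((⟪x, t • eN⟫ : ℝ) : ℂ))) * (J x : ℂ)
      = Complex.exp (-(Complex.I * ((t * x (Fin.last N) : ℝ) : ℂ))) * (J x : ℂ)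
    rw [hip t x]
  have hsm : Tendsto (fun t : ℝ => t • eN) (nhds 0) (nhds 0) := by
    have : Continuous (fun t : ℝ => t • eN) := continuous_id.smul continuous_const
    simpa using this.tendsto' 0 0 (by simp)
  have hβtend : Tendsto (fun ξ : EuclideanSpace ℝ (Fin (N + 1)) => ‖ξ‖ ^ β) (nhds 0) (nhds 0) := by
    have h8 : ContinuousAt (fun r : ℝ => r ^ β) 0 :=
      Real.continuousAt_rpow_const 0 β (Or.inr hβ0.le)
    have := h8.tendsto.comp (continuous_norm.tendsto' (0 : EuclideanSpace ℝ (Fin (N + 1))) 0 norm_zero)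
    simpa [Function.comp_def, Real.zero_rpow hβ0.ne'] using this
  -- JT 0 = 1
  have hJT0 : JT 0 = 1 := by
    have hJcont : ContinuousAt JT 0 := by
      rw [hJTdef]
      refine continuousAt_of_dominated (bound := fun x => |J x|) ?_ ?_ hJint.abs ?_
      · exact Eventually.of_forall fun t =>
          (measK t).aestronglyMeasurable.mul
            (Complex.continuous_ofReal.comp_aestronglyMeasurable hJint.1)
      · refine Eventually.of_forall fun t => MeasureTheory.ae_of_all _ fun x => ?_
        rw [norm_mul, norm1 t x, one_mul]
        simp [Complex.norm_real]
      · refine MeasureTheory.ae_of_all _ fun x => ?_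
        have : Continuous fun t : ℝ =>
            Complex.exp (-(Complex.I * ((t * x (Fin.last N) : ℝ) : ℂ))) * (J x : ℂ) := by
          exact (Complex.continuous_exp.comp
            ((continuous_const.mul (Complex.continuous_ofReal.comp
              (continuous_id.mul continuous_const))).neg)).mul continuous_const
        exact this.continuousAt
    have hlim1 : Tendsto (fun ξ : EuclideanSpace ℝ (Fin (N + 1)) =>
        Fx ξ - (((1 - a * ‖ξ‖ ^ β : ℝ)) : ℂ)) (nhds 0) (nhds 0) :=
      hasymp.isBigO.trans_tendsto hβtend
    have hlim2 : Tendsto (fun ξ : EuclideanSpace ℝ (Fin (N + 1)) =>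
        (((1 - a * ‖ξ‖ ^ β : ℝ)) : ℂ)) (nhds 0) (nhds 1) := by
      have hr : Tendsto (fun ξ : EuclideanSpace ℝ (Fin (N + 1)) => (1 - a * ‖ξ‖ ^ β : ℝ))
          (nhds 0) (nhds 1) := by
        have := (tendsto_const_nhds (x := (1:ℝ)) (f := nhds (0 : EuclideanSpace ℝ (Fin (N + 1))))).sub
          (hβtend.const_mul a)
        simpa using this
      have h9 := Complex.continuous_ofReal.continuousAt.tendsto.comp hr
      simpa only [Function.comp_def, Complex.ofReal_one] using h9
    have hFlim : Tendsto Fx (nhds 0) (nhds 1) := by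
      have := hlim1.add hlim2
      simpa using this
    have hJTlim : Tendsto JT (nhds 0) (nhds 1) := by
      have := hFlim.comp hsm
      have e : (fun t : ℝ => Fx (t • eN)) = JT := funext heq
      rwa [show Fx ∘ (fun t : ℝ => t • eN) = fun t : ℝ => Fx (t • eN) from rfl, e] at this
    exact tendsto_nhds_unique hJcont.tendsto hJTlim
  have hAT0 : AT 0 = 0 := by
    rw [hATeq 0, hJT0]
    ring
  -- big-O bound for JT - 1
  have hO1 : ∃ C, ∀ᶠ t : ℝ in nhds 0, ‖JT t - 1‖ ≤ C * |t| ^ β := by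
    obtain ⟨C, hCev⟩ := Asymptotics.isBigO_iff.mp hasymp.isBigO
    refine ⟨|C| + a, ?_⟩
    filter_upwards [hsm.eventually hCev] with t h
    have hn : ‖t • eN‖ = |t| := by
      rw [norm_smul, heN, EuclideanSpace.norm_single]
      simp
    rw [hn] at h
    have hnn : (0:ℝ) ≤ |t| ^ β := Real.rpow_nonneg (abs_nonneg t) β
    have hrw : JT t - 1 = (Fx (t • eN) - (((1 - a * |t| ^ β : ℝ)) : ℂ)) - ((a * |t| ^ β : ℝ) : ℂ) := by
      rw [← heq t]
      push_cast
      ring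
    have h2 : ‖Fx (t • eN) - (((1 - a * |t| ^ β : ℝ)) : ℂ)‖ ≤ C * |t| ^ β := by
      refine h.trans ?_
      rw [Real.norm_eq_abs, abs_of_nonneg hnn]
    calc ‖JT t - 1‖ ≤ ‖Fx (t • eN) - (((1 - a * |t| ^ β : ℝ)) : ℂ)‖ + ‖(((a * |t| ^ β : ℝ)) : ℂ)‖ := by
          rw [hrw]; exact norm_sub_le _ _
      _ ≤ C * |t| ^ β + a * |t| ^ β := by
          refine add_le_add h2 ?_
          rw [Complex.norm_real, Real.norm_eq_abs, abs_mul, abs_of_nonneg ha.le,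
            abs_of_nonneg hnn]
      _ ≤ (|C| + a) * |t| ^ β := by
          have := le_abs_self C
          nlinarith
  -- conclude
  have hD := aux_limit hβ0 hATeq hJTeven hDA hAT0 hUd hO1
  have hI : Complex.I * ((∫ x : EuclideanSpace ℝ (Fin (N + 1)), x (Fin.last N) * Au x : ℝ) : ℂ) = 0 := by
    rwa [neg_eq_zero] at hD
  rcases mul_eq_zero.mp hI with h | h
  · exact absurd h Complex.I_ne_zero
  · exact Complex.ofReal_eq_zero.mp h
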